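/- There exists an absolute constant c > 0 such that, in the perturbation setup with the additional hypotheses ‖b‖ ≤ 1 and ‖b̄‖ ≤ 1, whenever M is invertible and c m ε (Δ ‖M⁻¹‖)² ≤ 1, then M̄ is invertible and the conjugate-gradient (kernel PLS) iterates g = R M⁻¹ R* b and ḡ = R̄ M̄⁻¹ R̄* b̄ satisfy ‖g − ḡ‖ ≤ c m ε (Δ ‖M⁻¹‖)². -/

import Mathlib

open ContinuousLinearMap

private lemma pow_sub_pow_eq' {A : Type*} [Ring A] (a b : A) :
    ∀ n : ℕ, a ^ n - b ^ n = ∑ j ∈ Finset.range n, b ^ j * (a - b) * a ^ (n - 1 - j)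
  | 0 => by simp
  | (n + 1) => by
    have ih := pow_sub_pow_eq' a b n
    rw [Finset.sum_range_succ']
    have h1 : ∀ j ∈ Finset.range n,
        b ^ (j + 1) * (a - b) * a ^ (n + 1 - 1 - (j + 1))
          = b * (b ^ j * (a - b) * a ^ (n - 1 - j)) := by
      intro j hj
      rw [pow_succ']
      have : n + 1 - 1 - (j + 1) = n - 1 - j := by omega
      rw [this, mul_assoc, mul_assoc, mul_assoc]
    rw [Finset.sum_congr rfl h1, ← Finset.mul_sum, ← ih]
    simp only [pow_zero, one_mul, Nat.add_sub_cancel, Nat.sub_zero]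
    rw [pow_succ' a n, pow_succ' b n, mul_sub, sub_mul]
    abel

private lemma pow_apply_norm_le' {H : Type*} [NormedAddCommGroup H] [NormedSpace ℝ H]
    {T : H →L[ℝ] H} (hT : ‖T‖ ≤ 1) : ∀ (n : ℕ) (x : H), ‖(T ^ n) x‖ ≤ ‖x‖
  | 0, x => by simp
  | (n + 1), x => by
    rw [pow_succ, ContinuousLinearMap.mul_apply]
    refine (pow_apply_norm_le' hT n (T x)).trans ((T.le_opNorm x).trans ?_)
    nlinarith [norm_nonneg x]

private lemma keyA {H : Type} [NormedAddCommGroup H] [InnerProductSpace ℝ H]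
    (S S' : H →L[ℝ] H) (hS'1 : ‖S'‖ ≤ 1)
    (b b' : H) (ε : ℝ) (hSS' : ‖S - S'‖ ≤ ε) (hbb' : ‖b - b'‖ ≤ ε)
    (m : ℕ)
    (R R' : EuclideanSpace ℝ (Fin m) →L[ℝ] H)
    (hR : ∀ v, R v = ∑ i : Fin m, v i • (S ^ (i : ℕ)) b)
    (hR' : ∀ v, R' v = ∑ i : Fin m, v i • (S' ^ (i : ℕ)) b') :
    ‖R - R'‖ ≤ Real.sqrt m * ε + m * ε * ‖R‖ := by
  have hε0 : 0 ≤ ε := le_trans (norm_nonneg _) hbb'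
  refine opNorm_le_bound _ (by positivity) fun v => ?_
  set u : ℕ → ℝ := fun n => if h : n < m then v ⟨n, h⟩ else 0 with hu
  have hsplit : (R - R') v
      = (∑ i : Fin m, v i • (((S ^ (i : ℕ)) - (S' ^ (i : ℕ))) b))
        + (∑ i : Fin m, v i • ((S' ^ (i : ℕ)) (b - b'))) := by
    rw [ContinuousLinearMap.sub_apply, hR, hR', ← Finset.sum_sub_distrib,
      ← Finset.sum_add_distrib]
    refine Finset.sum_congr rfl fun i _ => ?_
    rw [← smul_add, ← smul_sub]
    congr 1
    simp only [ContinuousLinearMap.sub_apply, map_sub]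
    abel
  -- T1 bound
  have habs : (∑ i : Fin m, |v i|) ≤ Real.sqrt m * ‖v‖ := by
    have h1 : (∑ i : Fin m, |v i|) ^ 2 ≤ (m : ℝ) * ∑ i : Fin m, |v i| ^ 2 := by
      have := sq_sum_le_card_mul_sum_sq
        (s := (Finset.univ : Finset (Fin m))) (f := fun i => |v i|)
      simpa using this
    have h2 : (∑ i : Fin m, |v i| ^ 2) = ‖v‖ ^ 2 := by
      rw [EuclideanSpace.norm_eq, Real.sq_sqrt (by positivity)]
      simp [Real.norm_eq_abs]
    have h3 : (∑ i : Fin m, |v i|) = Real.sqrt ((∑ i : Fin m, |v i|) ^ 2) :=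
      (Real.sqrt_sq (by positivity)).symm
    rw [h3]
    calc Real.sqrt ((∑ i : Fin m, |v i|) ^ 2)
        ≤ Real.sqrt ((m : ℝ) * ‖v‖ ^ 2) := Real.sqrt_le_sqrt (by rw [← h2]; exact h1)
      _ = Real.sqrt m * ‖v‖ := by
          rw [Real.sqrt_mul (by positivity), Real.sqrt_sq (norm_nonneg _)]
  have hT1 : ‖∑ i : Fin m, v i • ((S' ^ (i : ℕ)) (b - b'))‖ ≤ Real.sqrt m * ε * ‖v‖ := by
    calc ‖∑ i : Fin m, v i • ((S' ^ (i : ℕ)) (b - b'))‖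
        ≤ ∑ i : Fin m, ‖v i • ((S' ^ (i : ℕ)) (b - b'))‖ := norm_sum_le _ _
      _ ≤ ∑ i : Fin m, |v i| * ε := by
          refine Finset.sum_le_sum fun i _ => ?_
          rw [norm_smul, Real.norm_eq_abs]
          exact mul_le_mul_of_nonneg_left
            ((pow_apply_norm_le' hS'1 _ _).trans hbb') (abs_nonneg _)
      _ = (∑ i : Fin m, |v i|) * ε := by rw [← Finset.sum_mul]
      _ ≤ (Real.sqrt m * ‖v‖) * ε := by
          exact mul_le_mul_of_nonneg_right habs hε0
      _ = Real.sqrt m * ε * ‖v‖ := by ring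
  -- T2
  have hpow : ∀ i : Fin m, v i • (((S ^ (i : ℕ)) - (S' ^ (i : ℕ))) b)
      = ∑ j ∈ Finset.range m,
          (if j < (i : ℕ) then
            v i • ((S' ^ j) ((S - S') ((S ^ ((i : ℕ) - 1 - j)) b))) else 0) := by
    intro i
    have hfilter : Finset.range (i : ℕ)
        = (Finset.range m).filter (fun j => j < (i : ℕ)) := by
      ext j
      simp only [Finset.mem_range, Finset.mem_filter]
      have := i.isLt
      omega
    rw [pow_sub_pow_eq' S S' (i : ℕ), ContinuousLinearMap.sum_apply, Finset.smul_sum,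
      hfilter, Finset.sum_filter]
    refine Finset.sum_congr rfl fun j _ => ?_
    split_ifs with h
    · simp [ContinuousLinearMap.mul_apply]
    · rfl
  have hswap : (∑ i : Fin m, v i • (((S ^ (i : ℕ)) - (S' ^ (i : ℕ))) b))
      = ∑ j ∈ Finset.range m, ∑ i : Fin m,
          (if j < (i : ℕ) then
            v i • ((S' ^ j) ((S - S') ((S ^ ((i : ℕ) - 1 - j)) b))) else 0) := by
    rw [Finset.sum_congr rfl fun i _ => hpow i]
    exact Finset.sum_comm
  have hinner : ∀ j ∈ Finset.range m,
      ‖∑ i : Fin m, (if j < (i : ℕ) then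
          v i • ((S' ^ j) ((S - S') ((S ^ ((i : ℕ) - 1 - j)) b))) else 0)‖
        ≤ ε * (‖R‖ * ‖v‖) := by
    intro j hj
    rw [Finset.mem_range] at hj
    set w : EuclideanSpace ℝ (Fin m) := WithLp.toLp 2 (fun k : Fin m => u ((k : ℕ) + j + 1)) with hwdef
    have hpull : (∑ i : Fin m, (if j < (i : ℕ) then
          v i • ((S' ^ j) ((S - S') ((S ^ ((i : ℕ) - 1 - j)) b))) else 0))
        = (S' ^ j) ((S - S')
            (∑ i : Fin m, (if j < (i : ℕ) then v i • ((S ^ ((i : ℕ) - 1 - j)) b) else 0))) := by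
      rw [map_sum, map_sum]
      refine Finset.sum_congr rfl fun i _ => ?_
      split_ifs with h
      · rw [map_smul, map_smul]
      · rw [map_zero, map_zero]
    have hRw : R w = ∑ i : Fin m,
        (if j < (i : ℕ) then v i • ((S ^ ((i : ℕ) - 1 - j)) b) else 0) := by
      rw [hR w]
      have hL : (∑ k : Fin m, w k • (S ^ (k : ℕ)) b)
          = ∑ n ∈ Finset.range m, u (n + j + 1) • (S ^ n) b :=
        Fin.sum_univ_eq_sum_range (fun n => u (n + j + 1) • (S ^ n) b) m
      have hRr : (∑ i : Fin m, (if j < (i : ℕ) then v i • ((S ^ ((i : ℕ) - 1 - j)) b) else 0))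
          = ∑ n ∈ Finset.range m, (if j < n then u n • (S ^ (n - 1 - j)) b else 0) := by
        rw [← Fin.sum_univ_eq_sum_range (fun n => if j < n then u n • (S ^ (n - 1 - j)) b else 0) m]
        refine Finset.sum_congr rfl fun i _ => ?_
        simp [hu, i.isLt]
      have h1 : (∑ n ∈ Finset.range m, (if j < n then u n • (S ^ (n - 1 - j)) b else 0))
          = ∑ n ∈ Finset.Ico (j + 1) m, u n • (S ^ (n - 1 - j)) b := by
        rw [← Finset.sum_filter]
        congr 1
        ext n
        simp only [Finset.mem_filter, Finset.mem_range, Finset.mem_Ico]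
        omega
      have h2 : (∑ n ∈ Finset.Ico (j + 1) m, u n • (S ^ (n - 1 - j)) b)
          = ∑ k ∈ Finset.range (m - (j + 1)), u (j + 1 + k) • (S ^ (j + 1 + k - 1 - j)) b :=
        Finset.sum_Ico_eq_sum_range _ _ _
      have h3 : ∀ k ∈ Finset.range (m - (j + 1)),
          u (j + 1 + k) • (S ^ (j + 1 + k - 1 - j)) b = u (k + j + 1) • (S ^ k) b := by
        intro k hk
        have e1 : j + 1 + k = k + j + 1 := by omega
        have e2 : j + 1 + k - 1 - j = k := by omega
        rw [e2, e1]
      have h4 : (∑ n ∈ Finset.range m, u (n + j + 1) • (S ^ n) b)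
          = ∑ n ∈ Finset.range (m - (j + 1)), u (n + j + 1) • (S ^ n) b := by
        refine (Finset.sum_subset (Finset.range_subset_range.2 (by omega)) fun n hn hn2 => ?_).symm
        have hnot : ¬ (n + j + 1 < m) := by
          simp only [Finset.mem_range] at hn hn2
          omega
        simp only [hu]
        rw [dif_neg hnot, zero_smul]
      rw [hL, hRr, h1, h2, Finset.sum_congr rfl h3, h4]
    have hwv : ‖w‖ ≤ ‖v‖ := by
      rw [EuclideanSpace.norm_eq, EuclideanSpace.norm_eq]
      apply Real.sqrt_le_sqrt
      have hL : (∑ k : Fin m, ‖w k‖ ^ 2) = ∑ n ∈ Finset.range m, ‖u (n + j + 1)‖ ^ 2 :=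
        Fin.sum_univ_eq_sum_range (fun n => ‖u (n + j + 1)‖ ^ 2) m
      have hR2 : (∑ i : Fin m, ‖v i‖ ^ 2) = ∑ n ∈ Finset.range m, ‖u n‖ ^ 2 := by
        rw [← Fin.sum_univ_eq_sum_range (fun n => ‖u n‖ ^ 2) m]
        refine Finset.sum_congr rfl fun i _ => ?_
        simp [hu, i.isLt]
      rw [hL, hR2]
      have h4 : (∑ n ∈ Finset.range m, ‖u (n + j + 1)‖ ^ 2)
          = ∑ n ∈ Finset.range (m - (j + 1)), ‖u (n + j + 1)‖ ^ 2 := by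
        refine (Finset.sum_subset (Finset.range_subset_range.2 (by omega)) fun n hn hn2 => ?_).symm
        have hnot : ¬ (n + j + 1 < m) := by
          simp only [Finset.mem_range] at hn hn2
          omega
        simp only [hu]
        rw [dif_neg hnot, norm_zero]
        ring
      have h2 : (∑ k ∈ Finset.range (m - (j + 1)), ‖u (j + 1 + k)‖ ^ 2)
          = ∑ n ∈ Finset.Ico (j + 1) m, ‖u n‖ ^ 2 :=
        (Finset.sum_Ico_eq_sum_range (fun n => ‖u n‖ ^ 2) (j + 1) m).symm
      have h3 : ∀ k ∈ Finset.range (m - (j + 1)),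
          ‖u (k + j + 1)‖ ^ 2 = ‖u (j + 1 + k)‖ ^ 2 := by
        intro k hk
        have e1 : k + j + 1 = j + 1 + k := by omega
        rw [e1]
      rw [h4, Finset.sum_congr rfl h3, h2]
      refine Finset.sum_le_sum_of_subset_of_nonneg ?_ fun n _ _ => by positivity
      intro n hn
      simp only [Finset.mem_Ico, Finset.mem_range] at hn ⊢
      omega
    calc ‖∑ i : Fin m, (if j < (i : ℕ) then
          v i • ((S' ^ j) ((S - S') ((S ^ ((i : ℕ) - 1 - j)) b))) else 0)‖
        = ‖(S' ^ j) ((S - S') (R w))‖ := by rw [hpull, ← hRw]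
      _ ≤ ‖(S - S') (R w)‖ := pow_apply_norm_le' hS'1 j _
      _ ≤ ‖S - S'‖ * ‖R w‖ := le_opNorm _ _
      _ ≤ ε * (‖R‖ * ‖v‖) := by
          refine mul_le_mul hSS' ((R.le_opNorm w).trans ?_) (norm_nonneg _) hε0
          exact mul_le_mul_of_nonneg_left hwv (norm_nonneg _)
  calc ‖(R - R') v‖
      ≤ ‖∑ i : Fin m, v i • (((S ^ (i : ℕ)) - (S' ^ (i : ℕ))) b)‖
        + ‖∑ i : Fin m, v i • ((S' ^ (i : ℕ)) (b - b'))‖ := by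
        rw [hsplit]; exact norm_add_le _ _
    _ ≤ (∑ _j ∈ Finset.range m, ε * (‖R‖ * ‖v‖)) + Real.sqrt m * ε * ‖v‖ := by
        refine add_le_add ?_ hT1
        rw [hswap]
        exact (norm_sum_le _ _).trans (Finset.sum_le_sum hinner)
    _ = (Real.sqrt m * ε + m * ε * ‖R‖) * ‖v‖ := by
        rw [Finset.sum_const, Finset.card_range, nsmul_eq_mul]
        ring

open scoped RealInnerProductSpace
open ContinuousLinearMap

section MAIN

set_option maxHeartbeats 2000000 in
/-- There is an absolute constant `c > 0` such that, in the perturbation setup with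
`‖b‖ ≤ 1` and `‖b̄‖ ≤ 1`, whenever `M` is invertible and `c m ε (Δ ‖M⁻¹‖)² ≤ 1`, then `M̄`
is invertible and the conjugate-gradient (kernel PLS) iterates `g = R M⁻¹ R* b` and
`ḡ = R̄ M̄⁻¹ R̄* b̄` satisfy `‖g − ḡ‖ ≤ c m ε (Δ ‖M⁻¹‖)²`. -/
theorem stmt17 :
    ∃ c : ℝ, 0 < c ∧
      ∀ (H : Type) (_ : NormedAddCommGroup H) (_ : InnerProductSpace ℝ H) (_ : CompleteSpace H)
        (S S' : H →L[ℝ] H),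
        IsSelfAdjoint S → IsSelfAdjoint S' →
        (∀ x, 0 ≤ ⟪S x, x⟫) → (∀ x, 0 ≤ ⟪S' x, x⟫) → ‖S‖ ≤ 1 → ‖S'‖ ≤ 1 →
        ∀ (b b' : H) (ε : ℝ), 0 < ε → ‖S - S'‖ ≤ ε → ‖b - b'‖ ≤ ε →
        ‖b‖ ≤ 1 → ‖b'‖ ≤ 1 →
        ∀ m : ℕ, 1 ≤ m →
        ∀ (R R' : EuclideanSpace ℝ (Fin m) →L[ℝ] H),
          (∀ v, R v = ∑ i : Fin m, v i • (S ^ (i : ℕ)) b) →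
          (∀ v, R' v = ∑ i : Fin m, v i • (S' ^ (i : ℕ)) b') →
        ∀ (M M' Mp : EuclideanSpace ℝ (Fin m) →L[ℝ] EuclideanSpace ℝ (Fin m)),
          M = (adjoint R) ∘L (S ∘L R) →
          M' = (adjoint R') ∘L (S' ∘L R') →
          Mp = (adjoint R) ∘L R →
        ∀ Δ : ℝ, Δ = max ‖Mp‖ (1 / (m : ℝ)) →
          IsUnit M →
          c * m * ε * (Δ * ‖Ring.inverse M‖) ^ 2 ≤ 1 →
          IsUnit M' ∧
            ‖R (Ring.inverse M ((adjoint R) b)) - R' (Ring.inverse M' ((adjoint R') b'))‖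
              ≤ c * m * ε * (Δ * ‖Ring.inverse M‖) ^ 2 := by
  refine ⟨100, by norm_num, ?_⟩
  intro H _ _ _ S S' hSsa hS'sa hSpos hS'pos hS1 hS'1 b b' ε hε hSS' hbb' hb hb'
    m hm R R' hR hR' M M' Mp hM hM' hMp Δ hΔ hMu hsmall
  haveI : Nonempty (Fin m) := ⟨⟨0, hm⟩⟩
  haveI : Nontrivial (EuclideanSpace ℝ (Fin m)) := inferInstance
  set β := ‖Ring.inverse M‖ with hβ
  clear_value β
  set σ := Real.sqrt Δ with hσ
  have hm1 : (1 : ℝ) ≤ (m : ℝ) := by exact_mod_cast hm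
  have hmpos : (0 : ℝ) < (m : ℝ) := by linarith only [hm1]
  have hΔpos : 0 < Δ := lt_of_lt_of_le (by positivity) (hΔ ▸ le_max_right ‖Mp‖ (1 / (m : ℝ)))
  have hσpos : 0 < σ := Real.sqrt_pos.2 hΔpos
  have hσsq : σ * σ = Δ := Real.mul_self_sqrt hΔpos.le
  have hMpΔ : ‖Mp‖ ≤ Δ := hΔ ▸ le_max_left _ _
  have h1mΔ : 1 / (m : ℝ) ≤ Δ := hΔ ▸ le_max_right _ _
  have hnadjR : ‖adjoint R‖ = ‖R‖ := ContinuousLinearMap.adjoint.norm_map R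
  have hnadjR' : ‖adjoint R'‖ = ‖R'‖ := ContinuousLinearMap.adjoint.norm_map R'
  have hRsq : ‖R‖ * ‖R‖ = ‖Mp‖ := by
    rw [hMp]; exact (ContinuousLinearMap.norm_adjoint_comp_self R).symm
  have hRle : ‖R‖ ≤ σ := by
    calc ‖R‖ = Real.sqrt (‖R‖ * ‖R‖) := (Real.sqrt_mul_self (norm_nonneg R)).symm
      _ = Real.sqrt ‖Mp‖ := by rw [hRsq]
      _ ≤ Real.sqrt Δ := Real.sqrt_le_sqrt hMpΔ
      _ = σ := hσ.symm
  have hMle : ‖M‖ ≤ Δ := by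
    rw [hM]
    calc ‖adjoint R ∘L (S ∘L R)‖ ≤ ‖adjoint R‖ * ‖S ∘L R‖ := opNorm_comp_le _ _
      _ ≤ σ * (1 * σ) := by
          refine mul_le_mul (hnadjR ▸ hRle)
            ((opNorm_comp_le _ _).trans ?_) (norm_nonneg _) hσpos.le
          exact mul_le_mul hS1 hRle (norm_nonneg _) zero_le_one
      _ = Δ := by rw [one_mul, hσsq]
  have hNM : Ring.inverse M * M = 1 := Ring.inverse_mul_cancel M hMu
  have hone : ‖(1 : EuclideanSpace ℝ (Fin m) →L[ℝ] EuclideanSpace ℝ (Fin m))‖ = 1 := by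
    rw [ContinuousLinearMap.one_def]; exact norm_id
  have hβ0 : 0 ≤ β := hβ ▸ norm_nonneg _
  have hΔβ : (1 : ℝ) ≤ Δ * β := by
    have h1 := norm_mul_le (Ring.inverse M) M
    rw [hNM, hone, ← hβ] at h1
    have h2 : β * ‖M‖ ≤ β * Δ := mul_le_mul_of_nonneg_left hMle hβ0
    nlinarith only [h1, h2, hΔpos, hβ0]
  have hβpos : 0 < β := by nlinarith only [hΔpos, hΔβ, hβ0]
  set K := (m : ℝ) * ε with hK
  clear_value K
  have hKpos : 0 < K := by rw [hK]; exact mul_pos hmpos hε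
  have hεK : ε ≤ K := by rw [hK]; nlinarith only [hm1, hε]
  have hK1 : K * (Δ * β) ^ 2 ≤ 1 / 100 := by
    rw [hK]; nlinarith only [hsmall]
  have hKle : K ≤ 1 / 100 := by nlinarith only [hK1, hΔβ, hKpos.le, sq_nonneg (Δ * β - 1)]
  -- bound ‖R - R'‖
  have hsqrtm : Real.sqrt m ≤ (m : ℝ) * σ := by
    have h5 : Real.sqrt (1 / (m : ℝ)) ≤ σ := Real.sqrt_le_sqrt h1mΔ
    have h7 : (m : ℝ) * Real.sqrt (1 / (m : ℝ)) = Real.sqrt m := by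
      rw [one_div, Real.sqrt_inv, mul_comm, inv_mul_eq_div, Real.div_sqrt]
    calc Real.sqrt m = (m : ℝ) * Real.sqrt (1 / (m : ℝ)) := h7.symm
      _ ≤ (m : ℝ) * σ := mul_le_mul_of_nonneg_left h5 hmpos.le
  have hRR' : ‖R - R'‖ ≤ 2 * K * σ := by
    refine (keyA S S' hS'1 b b' ε hSS' hbb' m R R' hR hR').trans ?_
    have h8 : Real.sqrt m * ε ≤ (m : ℝ) * σ * ε := mul_le_mul_of_nonneg_right hsqrtm hε.le
    have h9 : (m : ℝ) * ε * ‖R‖ ≤ (m : ℝ) * ε * σ :=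
      mul_le_mul_of_nonneg_left hRle (le_of_lt (mul_pos hmpos hε))
    rw [hK]; linarith only [h8, h9]
  have hR'le : ‖R'‖ ≤ 2 * σ := by
    have h10 : ‖R'‖ ≤ ‖R‖ + ‖R - R'‖ := by
      calc ‖R'‖ = ‖R - (R - R')‖ := by rw [sub_sub_cancel]
        _ ≤ ‖R‖ + ‖R - R'‖ := norm_sub_le _ _
    nlinarith only [hσpos, hKle, hRR', hRle, hKpos, h10]
  -- bound ‖M - M'‖
  have hadj : adjoint (R - R') = adjoint R - adjoint R' :=
    map_sub ContinuousLinearMap.adjoint R R'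
  have hnadjD : ‖adjoint R - adjoint R'‖ = ‖R - R'‖ := by
    rw [← hadj]; exact ContinuousLinearMap.adjoint.norm_map (R - R')
  have hdecM : M - M' = (adjoint R) ∘L (S ∘L (R - R'))
      + (adjoint R - adjoint R') ∘L (S ∘L R')
      + (adjoint R') ∘L ((S - S') ∘L R') := by
    rw [hM, hM']
    refine ContinuousLinearMap.ext fun v => ?_
    simp only [ContinuousLinearMap.coe_comp', Function.comp_apply,
      ContinuousLinearMap.sub_apply, ContinuousLinearMap.add_apply, map_sub]
    abel
  have hA : ‖(adjoint R) ∘L (S ∘L (R - R'))‖ ≤ σ * (1 * (2 * K * σ)) := by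
    refine (opNorm_comp_le _ _).trans ?_
    refine mul_le_mul (hnadjR ▸ hRle) ((opNorm_comp_le _ _).trans ?_) (norm_nonneg _) hσpos.le
    exact mul_le_mul hS1 hRR' (norm_nonneg _) zero_le_one
  have hB : ‖(adjoint R - adjoint R') ∘L (S ∘L R')‖ ≤ (2 * K * σ) * (1 * (2 * σ)) := by
    refine (opNorm_comp_le _ _).trans ?_
    refine mul_le_mul (hnadjD ▸ hRR') ((opNorm_comp_le _ _).trans ?_) (norm_nonneg _)
      (by linarith only [mul_pos hKpos hσpos])
    exact mul_le_mul hS1 hR'le (norm_nonneg _) zero_le_one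
  have hC : ‖(adjoint R') ∘L ((S - S') ∘L R')‖ ≤ (2 * σ) * (ε * (2 * σ)) := by
    refine (opNorm_comp_le _ _).trans ?_
    refine mul_le_mul (hnadjR' ▸ hR'le) ((opNorm_comp_le _ _).trans ?_) (norm_nonneg _)
      (by linarith only [hσpos])
    exact mul_le_mul hSS' hR'le (norm_nonneg _) hε.le
  have hδ : ‖M - M'‖ ≤ 10 * K * Δ := by
    calc ‖M - M'‖ ≤ ‖(adjoint R) ∘L (S ∘L (R - R'))
          + (adjoint R - adjoint R') ∘L (S ∘L R')‖
          + ‖(adjoint R') ∘L ((S - S') ∘L R')‖ := by rw [hdecM]; exact norm_add_le _ _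
      _ ≤ ‖(adjoint R) ∘L (S ∘L (R - R'))‖ + ‖(adjoint R - adjoint R') ∘L (S ∘L R')‖
          + ‖(adjoint R') ∘L ((S - S') ∘L R')‖ := by
            have := norm_add_le ((adjoint R) ∘L (S ∘L (R - R')))
              ((adjoint R - adjoint R') ∘L (S ∘L R'))
            linarith only [this]
      _ ≤ 10 * K * Δ := by
          have w1 : σ * (1 * (2 * K * σ)) = 2 * (K * Δ) := by rw [← hσsq]; ring
          have w2 : (2 * K * σ) * (1 * (2 * σ)) = 4 * (K * Δ) := by rw [← hσsq]; ring
          have w3 : (2 * σ) * (ε * (2 * σ)) = 4 * (ε * Δ) := by rw [← hσsq]; ring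
          rw [w1] at hA; rw [w2] at hB; rw [w3] at hC
          have w4 : ε * Δ ≤ K * Δ := mul_le_mul_of_nonneg_right hεK hΔpos.le
          linarith only [hA, hB, hC, w4]
  -- M' is a unit
  have hPQ' : K * Δ * β ≤ K * (Δ * β) ^ 2 := by
    nlinarith only [mul_nonneg (mul_nonneg hKpos.le hΔpos.le) hβ0, hΔβ]
  have hδβ : ‖M - M'‖ * β ≤ 1 / 10 := by
    have m1 : ‖M - M'‖ * β ≤ 10 * K * Δ * β := mul_le_mul_of_nonneg_right hδ hβ0
    linarith only [m1, hPQ', hK1]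
  have hδβlt : ‖M - M'‖ < β⁻¹ := by
    rw [← one_div, lt_div_iff₀ hβpos]
    linarith only [hδβ]
  have hMeq : (hMu.unit : EuclideanSpace ℝ (Fin m) →L[ℝ] EuclideanSpace ℝ (Fin m)) = M :=
    hMu.unit_spec
  have hNunit : Ring.inverse M
      = ((hMu.unit⁻¹ : (EuclideanSpace ℝ (Fin m) →L[ℝ] EuclideanSpace ℝ (Fin m))ˣ) :
          EuclideanSpace ℝ (Fin m) →L[ℝ] EuclideanSpace ℝ (Fin m)) := by
    conv_lhs => rw [← hMeq]
    exact Ring.inverse_unit hMu.unit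
  have hnear : ‖M' - (hMu.unit : EuclideanSpace ℝ (Fin m) →L[ℝ] EuclideanSpace ℝ (Fin m))‖
      < ‖((hMu.unit⁻¹ : (EuclideanSpace ℝ (Fin m) →L[ℝ] EuclideanSpace ℝ (Fin m))ˣ) :
          EuclideanSpace ℝ (Fin m) →L[ℝ] EuclideanSpace ℝ (Fin m))‖⁻¹ := by
    rw [hMeq, ← hNunit, norm_sub_rev, ← hβ]
    exact hδβlt
  have hM'u : IsUnit M' := ⟨Units.ofNearby hMu.unit M' hnear, rfl⟩
  refine ⟨hM'u, ?_⟩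
  have hM'N' : M' * Ring.inverse M' = 1 := Ring.mul_inverse_cancel M' hM'u
  -- lower bound and inverse of M'
  have hlow : ∀ x, ‖x‖ ≤ 2 * β * ‖M' x‖ := by
    intro x
    have e1 : (Ring.inverse M) (M x) = x := by
      rw [← ContinuousLinearMap.mul_apply, hNM, ContinuousLinearMap.one_apply]
    have e2 : ‖x‖ ≤ β * ‖M x‖ := by
      conv_lhs => rw [← e1]
      rw [hβ]
      exact le_opNorm _ _
    have e4 : ‖M x - M' x‖ ≤ ‖M - M'‖ * ‖x‖ := by
      rw [← ContinuousLinearMap.sub_apply]; exact le_opNorm _ _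
    have e3 : ‖M x‖ ≤ ‖M' x‖ + ‖M - M'‖ * ‖x‖ := by
      calc ‖M x‖ = ‖M' x + (M x - M' x)‖ := by congr 1; abel
        _ ≤ ‖M' x‖ + ‖M x - M' x‖ := norm_add_le _ _
        _ ≤ ‖M' x‖ + ‖M - M'‖ * ‖x‖ := by linarith only [e4]
    have e5 : β * (‖M - M'‖ * ‖x‖) ≤ (1 / 10) * ‖x‖ := by
      have h13 := mul_le_mul_of_nonneg_right hδβ (norm_nonneg x)
      linarith only [h13]
    have e6 := mul_le_mul_of_nonneg_left e3 hβ0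
    have e7 : 0 ≤ β * ‖M' x‖ := mul_nonneg hβ0 (norm_nonneg _)
    nlinarith only [e2, e5, e6, e7]
  have hβ'le : ‖Ring.inverse M'‖ ≤ 2 * β := by
    refine opNorm_le_bound _ (by linarith only [hβpos]) fun y => ?_
    have h11 := hlow (Ring.inverse M' y)
    rwa [← ContinuousLinearMap.mul_apply, hM'N', ContinuousLinearMap.one_apply] at h11
  -- difference of inverses
  have hNN'id : Ring.inverse M - Ring.inverse M'
      = Ring.inverse M * (M' - M) * Ring.inverse M' := by
    have h12 : Ring.inverse M * (M' - M) * Ring.inverse M'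
        = Ring.inverse M * (M' * Ring.inverse M')
          - (Ring.inverse M * M) * Ring.inverse M' := by
      rw [mul_sub, sub_mul, mul_assoc]
    rw [h12, hM'N', hNM, mul_one, one_mul]
  have hNN' : ‖Ring.inverse M - Ring.inverse M'‖ ≤ β * (10 * K * Δ) * (2 * β) := by
    rw [hNN'id]
    calc ‖Ring.inverse M * (M' - M) * Ring.inverse M'‖
        ≤ ‖Ring.inverse M * (M' - M)‖ * ‖Ring.inverse M'‖ := norm_mul_le _ _
      _ ≤ (‖Ring.inverse M‖ * ‖M' - M‖) * ‖Ring.inverse M'‖ :=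
          mul_le_mul_of_nonneg_right (norm_mul_le _ _) (norm_nonneg _)
      _ ≤ β * (10 * K * Δ) * (2 * β) := by
          rw [norm_sub_rev M' M, ← hβ]
          have hKΔ0 : (0:ℝ) ≤ 10 * K * Δ := by linarith only [mul_pos hKpos hΔpos]
          refine mul_le_mul ?_ hβ'le (norm_nonneg _) (mul_nonneg hβ0 hKΔ0)
          exact mul_le_mul_of_nonneg_left hδ hβ0
  -- final decomposition
  have hdecg : R (Ring.inverse M ((adjoint R) b)) - R' (Ring.inverse M' ((adjoint R') b'))
      = (R - R') (Ring.inverse M ((adjoint R) b))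
        + R' ((Ring.inverse M - Ring.inverse M') ((adjoint R) b))
        + R' (Ring.inverse M' (((adjoint R) - (adjoint R')) b))
        + R' (Ring.inverse M' ((adjoint R') (b - b'))) := by
    simp only [ContinuousLinearMap.sub_apply, map_sub]
    abel
  have hxb : ‖(adjoint R) b‖ ≤ σ := by
    refine ((adjoint R).le_opNorm b).trans ?_
    rw [hnadjR]
    calc ‖R‖ * ‖b‖ ≤ σ * 1 := mul_le_mul hRle hb (norm_nonneg b) hσpos.le
      _ = σ := mul_one σ
  have t1 : ‖(R - R') (Ring.inverse M ((adjoint R) b))‖ ≤ (2 * K * σ) * (β * σ) := by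
    refine (le_opNorm _ _).trans ?_
    refine mul_le_mul hRR' ((le_opNorm _ _).trans ?_) (norm_nonneg _)
      (by linarith only [mul_pos hKpos hσpos])
    exact mul_le_mul hβ.ge hxb (norm_nonneg _) hβ0
  have t2 : ‖R' ((Ring.inverse M - Ring.inverse M') ((adjoint R) b))‖
      ≤ (2 * σ) * ((β * (10 * K * Δ) * (2 * β)) * σ) := by
    refine (le_opNorm _ _).trans ?_
    refine mul_le_mul hR'le ((le_opNorm _ _).trans ?_) (norm_nonneg _)
      (by linarith only [hσpos])
    have hKΔ0 : (0:ℝ) ≤ 10 * K * Δ := by linarith only [mul_pos hKpos hΔpos]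
    exact mul_le_mul hNN' hxb (norm_nonneg _)
      (mul_nonneg (mul_nonneg hβ0 hKΔ0) (by linarith only [hβpos]))
  have t3 : ‖R' (Ring.inverse M' (((adjoint R) - (adjoint R')) b))‖
      ≤ (2 * σ) * ((2 * β) * ((2 * K * σ) * 1)) := by
    refine (le_opNorm _ _).trans ?_
    refine mul_le_mul hR'le ((le_opNorm _ _).trans ?_) (norm_nonneg _)
      (by linarith only [hσpos])
    refine mul_le_mul hβ'le ((le_opNorm _ _).trans ?_) (norm_nonneg _)
      (by linarith only [hβpos])
    exact mul_le_mul (hnadjD ▸ hRR') hb (norm_nonneg _)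
      (by linarith only [mul_pos hKpos hσpos])
  have t4 : ‖R' (Ring.inverse M' ((adjoint R') (b - b')))‖
      ≤ (2 * σ) * ((2 * β) * ((2 * σ) * ε)) := by
    refine (le_opNorm _ _).trans ?_
    refine mul_le_mul hR'le ((le_opNorm _ _).trans ?_) (norm_nonneg _)
      (by linarith only [hσpos])
    refine mul_le_mul hβ'le ((le_opNorm _ _).trans ?_) (norm_nonneg _)
      (by linarith only [hβpos])
    exact mul_le_mul (hnadjR' ▸ hR'le) hbb' (norm_nonneg _)
      (by linarith only [hσpos])
  have hgoal : (100 : ℝ) * (m : ℝ) * ε * (Δ * β) ^ 2 = 100 * K * (Δ * β) ^ 2 := by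
    rw [hK]; ring
  rw [hdecg, hgoal]
  have htot := norm_add_le
    ((R - R') (Ring.inverse M ((adjoint R) b))
      + R' ((Ring.inverse M - Ring.inverse M') ((adjoint R) b))
      + R' (Ring.inverse M' (((adjoint R) - (adjoint R')) b)))
    (R' (Ring.inverse M' ((adjoint R') (b - b'))))
  have htot2 := norm_add_le
    ((R - R') (Ring.inverse M ((adjoint R) b))
      + R' ((Ring.inverse M - Ring.inverse M') ((adjoint R) b)))
    (R' (Ring.inverse M' (((adjoint R) - (adjoint R')) b)))
  have htot3 := norm_add_le
    ((R - R') (Ring.inverse M ((adjoint R) b)))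
    (R' ((Ring.inverse M - Ring.inverse M') ((adjoint R) b)))
  have hPQ : K * Δ * β * (Δ * β - 1) ≥ 0 :=
    mul_nonneg (mul_nonneg (mul_nonneg hKpos.le hΔpos.le) hβpos.le) (sub_nonneg.2 hΔβ)
  have hεΔβ : ε * Δ * β ≤ K * Δ * β := by
    refine mul_le_mul_of_nonneg_right (mul_le_mul_of_nonneg_right hεK hΔpos.le) hβpos.le
  have u1 : (2 * K * σ) * (β * σ) = 2 * (K * Δ * β) := by rw [← hσsq]; ring
  have u2 : (2 * σ) * ((β * (10 * K * Δ) * (2 * β)) * σ) = 40 * (K * (Δ * β) ^ 2) := by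
    rw [← hσsq]; ring
  have u3 : (2 * σ) * ((2 * β) * ((2 * K * σ) * 1)) = 8 * (K * Δ * β) := by
    rw [← hσsq]; ring
  have u4 : (2 * σ) * ((2 * β) * ((2 * σ) * ε)) = 8 * (ε * Δ * β) := by
    rw [← hσsq]; ring
  have hQ0 : 0 ≤ K * (Δ * β) ^ 2 := mul_nonneg hKpos.le (sq_nonneg _)
  rw [u1] at t1
  rw [u2] at t2
  rw [u3] at t3
  rw [u4] at t4
  linarith only [t1, t2, t3, t4, htot, htot2, htot3, hPQ', hεΔβ, hQ0]

end MAIN
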